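/- Assume in addition 0 < s < 1 and that either μ > 0 or q < 1. Then ψ_μ is differentiable at every point of ℝ, its derivative at 0 equals 0, and for every θ ≠ 0 its derivative at θ equals 1/(μ·s·|ψ_μ(θ)|^(s−1) + q·|ψ_μ(θ)|^(q−1)). -/

import Mathlib

open Real

noncomputable def g (s q μ ζ : ℝ) : ℝ := μ * |ζ| ^ (s - 1) * ζ + |ζ| ^ (q - 1) * ζ

/-- helper: the odd power function -/
noncomputable def fp (p ζ : ℝ) : ℝ := |ζ| ^ (p - 1) * ζ

lemma fp_of_nonneg {p ζ : ℝ} (hp : 0 < p) (hζ : 0 ≤ ζ) : fp p ζ = ζ ^ p := by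
  rcases eq_or_lt_of_le hζ with h | h
  · simp [fp, ← h, Real.zero_rpow hp.ne']
  · rw [fp, abs_of_pos h, ← Real.rpow_add_one h.ne', sub_add_cancel]

lemma fp_neg (p ζ : ℝ) : fp p (-ζ) = -fp p ζ := by
  simp [fp, mul_comm]

lemma fp_strictMono {p : ℝ} (hp : 0 < p) : StrictMono (fp p) := by
  intro a b hab
  rcases le_or_gt 0 a with ha | ha
  · rw [fp_of_nonneg hp ha, fp_of_nonneg hp (ha.trans hab.le)]
    exact Real.rpow_lt_rpow ha hab hp
  · rcases le_or_gt 0 b with hb | hb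
    · have h1 : fp p a = -((-a) ^ p) := by
        rw [← fp_of_nonneg hp (by linarith : (0:ℝ) ≤ -a), fp_neg]; ring
      have h2 : (0:ℝ) < (-a) ^ p := Real.rpow_pos_of_pos (by linarith) p
      have h3 : (0:ℝ) ≤ b ^ p := Real.rpow_nonneg hb p
      rw [h1, fp_of_nonneg hp hb]; linarith
    · have h1 : fp p a = -((-a) ^ p) := by
        rw [← fp_of_nonneg hp (by linarith : (0:ℝ) ≤ -a), fp_neg]; ring
      have h2 : fp p b = -((-b) ^ p) := by
        rw [← fp_of_nonneg hp (by linarith : (0:ℝ) ≤ -b), fp_neg]; ring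
      have h3 : (-b) ^ p < (-a) ^ p :=
        Real.rpow_lt_rpow (by linarith) (by linarith) hp
      rw [h1, h2]; linarith

lemma fp_eq_of_pos {p ζ : ℝ} (h : 0 < ζ) : fp p ζ = ζ ^ p := by
  rw [fp, abs_of_pos h, ← Real.rpow_add_one h.ne', sub_add_cancel]

lemma fp_eq_of_neg {p ζ : ℝ} (h : ζ < 0) : fp p ζ = -((-ζ) ^ p) := by
  have h2 : (-ζ) ^ (p - 1) * -ζ = (-ζ) ^ p := by
    rw [← Real.rpow_add_one (by simp [h.ne] : -ζ ≠ 0), sub_add_cancel]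
  rw [fp, abs_of_neg h, ← h2]; ring

lemma fp_hasDerivAt {p ζ : ℝ} (hζ : ζ ≠ 0) :
    HasDerivAt (fp p) (p * |ζ| ^ (p - 1)) ζ := by
  rcases hζ.lt_or_gt with h | h
  · have hne : -ζ ≠ 0 := by simpa using hζ
    have h1 : HasDerivAt (fun x : ℝ => (-x) ^ p) (p * (-ζ) ^ (p - 1) * (-1)) ζ :=
      (Real.hasDerivAt_rpow_const (Or.inl hne)).comp ζ (hasDerivAt_neg ζ)
    have h2 : HasDerivAt (fun x : ℝ => -((-x) ^ p)) (p * (-ζ) ^ (p - 1)) ζ := by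
      have := h1.neg; refine this.congr_deriv ?_; ring
    have h3 : (fun x : ℝ => -((-x) ^ p)) =ᶠ[nhds ζ] fp p := by
      filter_upwards [eventually_lt_nhds h] with x hx
      rw [fp_eq_of_neg hx]
    have := h2.congr_of_eventuallyEq h3.symm
    rwa [abs_of_neg h]
  · have h1 : HasDerivAt (fun x : ℝ => x ^ p) (p * ζ ^ (p - 1)) ζ :=
      Real.hasDerivAt_rpow_const (Or.inl hζ)
    have h3 : (fun x : ℝ => x ^ p) =ᶠ[nhds ζ] fp p := by
      filter_upwards [eventually_gt_nhds h] with x hx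
      rw [fp_eq_of_pos hx]
    have := h1.congr_of_eventuallyEq h3.symm
    rwa [abs_of_pos h]

lemma g_eq (s q μ ζ : ℝ) : g s q μ ζ = μ * fp s ζ + fp q ζ := by
  simp [g, fp]; ring

lemma g_strictMono {s q μ : ℝ} (hs : 0 < s) (hq : 0 < q) (hμ : 0 ≤ μ) :
    StrictMono (g s q μ) := by
  have : StrictMono (fun ζ => μ * fp s ζ + fp q ζ) := by
    apply Monotone.add_strictMono
    · exact fun a b hab => mul_le_mul_of_nonneg_left ((fp_strictMono hs).monotone hab) hμ
    · exact fp_strictMono hq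
  simpa only [← g_eq] using this

lemma g_hasDerivAt {s q μ ζ : ℝ} (hζ : ζ ≠ 0) :
    HasDerivAt (g s q μ) (μ * s * |ζ| ^ (s - 1) + q * |ζ| ^ (q - 1)) ζ := by
  have h := ((fp_hasDerivAt (p := s) hζ).const_mul μ).add (fp_hasDerivAt (p := q) hζ)
  have he : (fun ζ => μ * fp s ζ + fp q ζ) = g s q μ := by
    funext x; rw [g_eq]
  rw [show ((fun y => μ * fp s y) + fp q) = g s q μ from he] at h
  refine h.congr_deriv ?_; ring

theorem stmt_2 (s q : ℝ) (hs : 0 < s) (hs1 : s < 1) (hsq : s < q)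
    (μ : ℝ) (hμ : 0 ≤ μ) (hcase : 0 < μ ∨ q < 1)
    (ψ : ℝ → ℝ)
    (hψ_right : ∀ θ : ℝ, g s q μ (ψ θ) = θ)
    (hψ_left : ∀ ζ : ℝ, ψ (g s q μ ζ) = ζ) :
    Differentiable ℝ ψ ∧
    deriv ψ 0 = 0 ∧
    (∀ θ : ℝ, θ ≠ 0 →
      deriv ψ θ = 1 / (μ * s * |ψ θ| ^ (s - 1) + q * |ψ θ| ^ (q - 1))) := by
  have hq : 0 < q := hs.trans hsq
  have hg0 : g s q μ 0 = 0 := by simp [g]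
  have hψ0 : ψ 0 = 0 := by have := hψ_left 0; rwa [hg0] at this
  have hgs := g_strictMono (μ := μ) hs hq hμ
  have hψmono : Monotone ψ := by
    intro a b hab
    by_contra hcon
    push_neg at hcon
    have := hgs hcon
    rw [hψ_right, hψ_right] at this
    linarith
  have hψsurj : Function.Surjective ψ := fun ζ => ⟨g s q μ ζ, hψ_left ζ⟩
  have hψcont : Continuous ψ := hψmono.continuous_of_surjective hψsurj
  have hψne : ∀ θ : ℝ, θ ≠ 0 → ψ θ ≠ 0 := by
    intro θ hθ h
    exact hθ (by rw [← hψ_right θ, h, hg0])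
  -- derivative at nonzero points
  have hD : ∀ θ : ℝ, θ ≠ 0 →
      HasDerivAt ψ (μ * s * |ψ θ| ^ (s - 1) + q * |ψ θ| ^ (q - 1))⁻¹ θ := by
    intro θ hθ
    have hne := hψne θ hθ
    have hf := g_hasDerivAt (s := s) (q := q) (μ := μ) hne
    have hpos : 0 < μ * s * |ψ θ| ^ (s - 1) + q * |ψ θ| ^ (q - 1) := by
      have h1 : 0 < |ψ θ| := abs_pos.mpr hne
      have h2 : 0 < q * |ψ θ| ^ (q - 1) := mul_pos hq (Real.rpow_pos_of_pos h1 _)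
      have h3 : 0 ≤ μ * s * |ψ θ| ^ (s - 1) :=
        mul_nonneg (mul_nonneg hμ hs.le) (Real.rpow_pos_of_pos h1 _).le
      linarith
    exact hf.of_local_left_inverse hψcont.continuousAt hpos.ne'
      (Filter.Eventually.of_forall hψ_right)
  -- |θ| in terms of |ψ θ|
  have habs : ∀ θ : ℝ, θ ≠ 0 → |θ| = μ * |ψ θ| ^ s + |ψ θ| ^ q := by
    intro θ hθ
    have hne := hψne θ hθ
    have hA : 0 < |ψ θ| := abs_pos.mpr hne
    have key : ∀ p : ℝ, |ψ θ| ^ (p - 1) * |ψ θ| = |ψ θ| ^ p := by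
      intro p
      rw [← Real.rpow_add_one hA.ne', sub_add_cancel]
    have hfac : 0 ≤ μ * |ψ θ| ^ (s - 1) + |ψ θ| ^ (q - 1) := by
      have := Real.rpow_pos_of_pos hA (s - 1)
      have := Real.rpow_pos_of_pos hA (q - 1)
      positivity
    calc |θ| = |g s q μ (ψ θ)| := by rw [hψ_right]
      _ = |(μ * |ψ θ| ^ (s - 1) + |ψ θ| ^ (q - 1)) * ψ θ| := by rw [g]; ring_nf
      _ = (μ * |ψ θ| ^ (s - 1) + |ψ θ| ^ (q - 1)) * |ψ θ| := by
          rw [abs_mul, abs_of_nonneg hfac]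
      _ = μ * |ψ θ| ^ s + |ψ θ| ^ q := by
          rw [add_mul, mul_assoc, key s, key q]
  -- derivative at 0
  have h0 : HasDerivAt ψ 0 0 := by
    rw [hasDerivAt_iff_tendsto_slope]
    obtain ⟨c, M, hc, hM, hbound⟩ :
        ∃ c M : ℝ, 0 < c ∧ 0 ≤ M ∧ ∀ θ : ℝ, θ ≠ 0 → |slope ψ 0 θ| ≤ M * |ψ θ| ^ c := by
      have hslope : ∀ θ : ℝ, θ ≠ 0 → |slope ψ 0 θ| = |ψ θ| / |θ| := by
        intro θ hθ
        rw [slope_def_field, hψ0, sub_zero, sub_zero, abs_div]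
      rcases hcase with hμpos | hq1
      · refine ⟨1 - s, μ⁻¹, by linarith, by positivity, fun θ hθ => ?_⟩
        have hA : 0 < |ψ θ| := abs_pos.mpr (hψne θ hθ)
        have h1 : 0 < μ * |ψ θ| ^ s := mul_pos hμpos (Real.rpow_pos_of_pos hA _)
        have h2 : 0 ≤ |ψ θ| ^ q := (Real.rpow_pos_of_pos hA _).le
        rw [hslope θ hθ, habs θ hθ]
        calc |ψ θ| / (μ * |ψ θ| ^ s + |ψ θ| ^ q) ≤ |ψ θ| / (μ * |ψ θ| ^ s) :=
              div_le_div_of_nonneg_left hA.le h1 (by linarith)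
          _ = μ⁻¹ * |ψ θ| ^ (1 - s) := by
              rw [Real.rpow_sub hA, Real.rpow_one]; field_simp
      · refine ⟨1 - q, 1, by linarith, zero_le_one, fun θ hθ => ?_⟩
        have hA : 0 < |ψ θ| := abs_pos.mpr (hψne θ hθ)
        have h1 : 0 < |ψ θ| ^ q := Real.rpow_pos_of_pos hA _
        have h2 : 0 ≤ μ * |ψ θ| ^ s :=
          mul_nonneg hμ (Real.rpow_pos_of_pos hA _).le
        rw [hslope θ hθ, habs θ hθ, one_mul]
        calc |ψ θ| / (μ * |ψ θ| ^ s + |ψ θ| ^ q) ≤ |ψ θ| / |ψ θ| ^ q :=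
              div_le_div_of_nonneg_left hA.le h1 (by linarith)
          _ = |ψ θ| ^ (1 - q) := by
              rw [Real.rpow_sub hA, Real.rpow_one]
    have htend : Filter.Tendsto (fun θ => M * |ψ θ| ^ c) (nhdsWithin 0 {(0:ℝ)}ᶜ) (nhds 0) := by
      have hcont : ContinuousAt (fun θ => M * |ψ θ| ^ c) 0 := by
        apply ContinuousAt.mul continuousAt_const
        exact (Real.continuousAt_rpow_const _ _ (Or.inr hc.le)).comp
          (hψcont.abs.continuousAt)
      have hval : M * |ψ 0| ^ c = 0 := by
        rw [hψ0, abs_zero, Real.zero_rpow hc.ne', mul_zero]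
      have := hcont.continuousWithinAt (s := {(0:ℝ)}ᶜ)
      rw [ContinuousWithinAt, hval] at this
      exact this
    have habs0 : Filter.Tendsto (fun θ => |slope ψ 0 θ|) (nhdsWithin 0 {(0:ℝ)}ᶜ) (nhds 0) := by
      apply squeeze_zero' (Filter.Eventually.of_forall fun θ => abs_nonneg _) _ htend
      filter_upwards [self_mem_nhdsWithin] with θ hθ
      exact hbound θ hθ
    exact tendsto_zero_iff_abs_tendsto_zero _ |>.mpr habs0
  refine ⟨?_, ?_, ?_⟩
  · intro θ
    by_cases hθ : θ = 0
    · exact hθ ▸ h0.differentiableAt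
    · exact (hD θ hθ).differentiableAt
  · exact h0.deriv
  · intro θ hθ
    rw [(hD θ hθ).deriv, one_div]
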